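/- Let s ≥ 1 and suppose for all k < s the following holds: for any k×k lower triangular invertible matrix M with M e ≥ 0, off-diagonal entries ≤ 0, and any probability vector w ∈ ℝ^k, (w^T M^{-1} e)^2/(w^T M^{-2} e) ≤ 2k/(k+1). Then the same holds for s, i.e. for any s×s lower triangular invertible M with M e ≥ 0 and off-diagonal entries ≤ 0 and any probability vector w ∈ ℝ^s, (w^T M^{-1} e)^2/(w^T M^{-2} e) ≤ 2s/(s+1). -/

import Mathlib

open Matrix Finset

/-- Extend a sum over an initial segment to a full sum when the tail vanishes. -/
lemma sum_fin_extend {s k : ℕ} (hks : k ≤ s) (f : Fin s → ℝ)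
    (hf : ∀ j : Fin s, k ≤ (j : ℕ) → f j = 0) :
    (∑ b : Fin k, f ⟨b.1, lt_of_lt_of_le b.2 hks⟩) = ∑ j : Fin s, f j := by
  classical
  set g : ℕ → ℝ := fun n => if h : n < s then f ⟨n, h⟩ else 0 with hg
  have h1 : (∑ b : Fin k, f ⟨b.1, lt_of_lt_of_le b.2 hks⟩) = ∑ n ∈ Finset.range k, g n := by
    rw [← Fin.sum_univ_eq_sum_range]
    refine Finset.sum_congr rfl fun b _ => ?_
    simp only [hg]
    rw [dif_pos (lt_of_lt_of_le b.2 hks)]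
  have h2 : (∑ j : Fin s, f j) = ∑ n ∈ Finset.range s, g n := by
    rw [← Fin.sum_univ_eq_sum_range]
    refine Finset.sum_congr rfl fun j _ => ?_
    simp only [hg]
    rw [dif_pos j.2]
  rw [h1, h2]
  refine Finset.sum_subset (Finset.range_subset_range.mpr hks) fun n _ hnk => ?_
  simp only [hg]
  split
  · exact hf _ (by simpa using hnk)
  · rfl

/-- Split a full sum at index `i` when entries beyond `i` vanish. -/
lemma sum_fin_split {s : ℕ} (i : Fin s) (f : Fin s → ℝ)
    (hf : ∀ j : Fin s, i < j → f j = 0) :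
    (∑ j : Fin s, f j) = (∑ b : Fin (i : ℕ), f ⟨b.1, lt_trans b.2 i.2⟩) + f i := by
  have hks : (i : ℕ) + 1 ≤ s := i.2
  have hvan : ∀ j : Fin s, (i : ℕ) + 1 ≤ (j : ℕ) → f j = 0 := by
    intro j hj
    exact hf j (by rw [Fin.lt_def]; omega)
  rw [← sum_fin_extend hks f hvan, Fin.sum_univ_castSucc]
  congr 1

/-- Forward substitution: solutions of triangular systems with nonneg RHS are nonneg. -/
lemma forward_nonneg {n : ℕ} (M : Matrix (Fin n) (Fin n) ℝ)
    (hlt : ∀ i j, i < j → M i j = 0) (hdiag : ∀ i, 0 < M i i)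
    (hoff : ∀ i j, i ≠ j → M i j ≤ 0)
    (x b : Fin n → ℝ) (hx : M.mulVec x = b) (hb : ∀ i, 0 ≤ b i) :
    ∀ i, 0 ≤ x i ∧ b i ≤ M i i * x i := by
  classical
  have main : ∀ N : ℕ, ∀ i : Fin n, (i : ℕ) < N → 0 ≤ x i ∧ b i ≤ M i i * x i := by
    intro N
    induction N with
    | zero => exact fun i h => absurd h (Nat.not_lt_zero _)
    | succ N ihN =>
      intro i hi
      have hrow : ∑ j, M i j * x j = b i := by
        have := congrFun hx i
        simpa [Matrix.mulVec, dotProduct] using this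
      have hsplit : ∑ j, M i j * x j
          = M i i * x i + ∑ j ∈ Finset.univ.erase i, M i j * x j :=
        (Finset.add_sum_erase _ _ (Finset.mem_univ i)).symm
      have hrest : ∑ j ∈ Finset.univ.erase i, M i j * x j ≤ 0 := by
        refine Finset.sum_nonpos fun j hj => ?_
        have hji : j ≠ i := Finset.ne_of_mem_erase hj
        rcases lt_or_gt_of_ne hji with h | h
        · have hj' : (j : ℕ) < N := by
            have := Fin.lt_def.mp h
            omega
          exact mul_nonpos_of_nonpos_of_nonneg (hoff i j (ne_of_gt h)) (ihN j hj').1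
        · rw [hlt i j h]
          simp
      have hkey : b i ≤ M i i * x i := by
        rw [← hrow, hsplit]
        linarith
      refine ⟨?_, hkey⟩
      have h0 : 0 ≤ M i i * x i := le_trans (hb i) hkey
      exact (mul_nonneg_iff_of_pos_left (hdiag i)).mp h0
  exact fun i => main n i i.2

/-- Diagonal entries of a triangular matrix with unit determinant, nonneg row sums and
nonpositive off-diagonal entries are positive. -/
lemma diag_pos {n : ℕ} (M : Matrix (Fin n) (Fin n) ℝ)
    (hlt : ∀ i j, i < j → M i j = 0) (hdet : IsUnit M.det)
    (hMe : ∀ i, 0 ≤ M.mulVec (fun _ => (1 : ℝ)) i)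
    (hoff : ∀ i j, i ≠ j → M i j ≤ 0) :
    ∀ i, 0 < M i i := by
  classical
  intro i
  have hnn : 0 ≤ M i i := by
    have hrow : M.mulVec (fun _ => (1 : ℝ)) i = ∑ j, M i j := by
      simp [Matrix.mulVec, dotProduct]
    have hsplit : ∑ j, M i j = M i i + ∑ j ∈ Finset.univ.erase i, M i j :=
      (Finset.add_sum_erase _ _ (Finset.mem_univ i)).symm
    have hrest : ∑ j ∈ Finset.univ.erase i, M i j ≤ 0 :=
      Finset.sum_nonpos fun j hj => hoff i j (Ne.symm (Finset.ne_of_mem_erase hj))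
    have h0 := hMe i
    rw [hrow, hsplit] at h0
    linarith
  have hdet' : M.det = ∏ j, M j j := by
    apply Matrix.det_of_lowerTriangular
    intro a b hab
    exact hlt a b (by simpa using hab)
  have hne : M i i ≠ 0 := by
    intro h0
    have hz : M.det = 0 := by
      rw [hdet']
      exact Finset.prod_eq_zero (Finset.mem_univ i) h0
    exact (hdet.ne_zero) hz
  exact lt_of_le_of_ne hnn (Ne.symm hne)

/-- The key polynomial inequality for the induction step. -/
lemma quad_step (κ σ A P : ℝ) (hκ : 1 ≤ κ) (hσ : κ + 1 ≤ σ) (hA : 0 ≤ A)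
    (hP : (κ + 1) * A ^ 2 ≤ 2 * κ * P) :
    (σ + 1) * (1 + A) ^ 2 ≤ 2 * σ * (1 + A) + 2 * σ * P := by
  have hκ0 : 0 < κ := by linarith
  have hσ0 : 0 < σ := by linarith
  have h1 : σ * ((κ + 1) * A ^ 2) ≤ σ * (2 * κ * P) :=
    mul_le_mul_of_nonneg_left hP hσ0.le
  have h2 : 0 ≤ (κ - A) ^ 2 := sq_nonneg _
  have h3 : 0 ≤ (σ - κ - 1) * (κ + A ^ 2) := mul_nonneg (by linarith) (by positivity)
  nlinarith [h1, h2, h3, hκ0, sq_nonneg (1 + A)]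

set_option maxHeartbeats 1000000 in
theorem stmt_16 (s : ℕ) (hs : 1 ≤ s)
    (ih : ∀ k, k < s → ∀ M : Matrix (Fin k) (Fin k) ℝ, ∀ w : Fin k → ℝ,
      (∀ i j, i < j → M i j = 0) → IsUnit M.det →
      (∀ i, 0 ≤ M.mulVec (fun _ => (1 : ℝ)) i) →
      (∀ i j, i ≠ j → M i j ≤ 0) →
      (∀ i, 0 ≤ w i) → w ⬝ᵥ (fun _ => (1 : ℝ)) = 1 →
      0 < w ⬝ᵥ (M⁻¹ * M⁻¹).mulVec (fun _ => (1 : ℝ)) →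
      (w ⬝ᵥ M⁻¹.mulVec (fun _ => (1 : ℝ))) ^ 2 /
          (w ⬝ᵥ (M⁻¹ * M⁻¹).mulVec (fun _ => (1 : ℝ))) ≤ 2 * k / (k + 1)) :
    ∀ M : Matrix (Fin s) (Fin s) ℝ, ∀ w : Fin s → ℝ,
      (∀ i j, i < j → M i j = 0) → IsUnit M.det →
      (∀ i, 0 ≤ M.mulVec (fun _ => (1 : ℝ)) i) →
      (∀ i j, i ≠ j → M i j ≤ 0) →
      (∀ i, 0 ≤ w i) → w ⬝ᵥ (fun _ => (1 : ℝ)) = 1 →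
      0 < w ⬝ᵥ (M⁻¹ * M⁻¹).mulVec (fun _ => (1 : ℝ)) →
      (w ⬝ᵥ M⁻¹.mulVec (fun _ => (1 : ℝ))) ^ 2 /
          (w ⬝ᵥ (M⁻¹ * M⁻¹).mulVec (fun _ => (1 : ℝ))) ≤ 2 * s / (s + 1) := by
  intro M w hlt hdet hMe hoff hw hw1 hden
  classical
  set u : Fin s → ℝ := M⁻¹.mulVec (fun _ => (1 : ℝ)) with hu
  set v : Fin s → ℝ := M⁻¹.mulVec u with hv
  have hMinv : M * M⁻¹ = 1 := Matrix.mul_nonsing_inv M hdet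
  have hMu : M.mulVec u = fun _ => (1 : ℝ) := by
    rw [hu, Matrix.mulVec_mulVec, hMinv, Matrix.one_mulVec]
  have hMv : M.mulVec v = u := by
    rw [hv, Matrix.mulVec_mulVec, hMinv, Matrix.one_mulVec]
  have hvv : (M⁻¹ * M⁻¹).mulVec (fun _ => (1 : ℝ)) = v := by
    rw [hv, hu, Matrix.mulVec_mulVec]
  rw [hvv] at hden ⊢
  clear_value u v
  have hdiag : ∀ i, 0 < M i i := diag_pos M hlt hdet hMe hoff
  have hun : ∀ i, 0 ≤ u i ∧ (1 : ℝ) ≤ M i i * u i := by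
    have := forward_nonneg M hlt hdiag hoff u (fun _ => (1 : ℝ)) hMu (fun _ => zero_le_one)
    exact this
  have hvn : ∀ i, 0 ≤ v i ∧ u i ≤ M i i * v i :=
    forward_nonneg M hlt hdiag hoff v u hMv fun i => (hun i).1
  -- pointwise key inequality
  have key : ∀ i : Fin s, (u i) ^ 2 ≤ 2 * (s : ℝ) / ((s : ℝ) + 1) * v i := by
    intro i
    have hm : 0 < M i i := hdiag i
    have hσ1 : (1 : ℝ) ≤ (s : ℝ) := by exact_mod_cast hs
    have hσ0 : (0 : ℝ) < (s : ℝ) + 1 := by linarith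
    set ι : Fin (i : ℕ) → Fin s := fun b => ⟨b.1, lt_trans b.2 i.2⟩ with hι
    have hne : ∀ b : Fin (i : ℕ), ι b ≠ i := fun b h =>
      (Nat.ne_of_lt b.2) (congrArg Fin.val h)
    have hcoef : ∀ b : Fin (i : ℕ), 0 ≤ -(M i (ι b)) :=
      fun b => neg_nonneg.mpr (hoff i (ι b) (Ne.symm (hne b)))
    set A : ℝ := ∑ b : Fin (i : ℕ), (-(M i (ι b))) * u (ι b) with hA
    set B : ℝ := ∑ b : Fin (i : ℕ), (-(M i (ι b))) * v (ι b) with hB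
    set t : ℝ := ∑ b : Fin (i : ℕ), (-(M i (ι b))) with ht
    have hA0 : 0 ≤ A :=
      Finset.sum_nonneg fun b _ => mul_nonneg (hcoef b) (hun (ι b)).1
    have hB0 : 0 ≤ B :=
      Finset.sum_nonneg fun b _ => mul_nonneg (hcoef b) (hvn (ι b)).1
    have ht0 : 0 ≤ t := Finset.sum_nonneg fun b _ => hcoef b
    -- splitting general sums at i
    have hsplit' : ∀ f : Fin s → ℝ, (∀ j : Fin s, i < j → f j = 0) →
        (∑ j : Fin s, f j) = (∑ b : Fin (i : ℕ), f (ι b)) + f i := by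
      intro f hf
      rw [sum_fin_split i f hf]
    -- row equations
    have hrowu : M i i * u i = 1 + A := by
      have h1 : (∑ j : Fin s, M i j * u j) = 1 := by
        have := congrFun hMu i
        simpa [Matrix.mulVec, dotProduct] using this
      have h2 : (∑ j : Fin s, M i j * u j)
          = (∑ b : Fin (i : ℕ), M i (ι b) * u (ι b)) + M i i * u i :=
        hsplit' (fun j => M i j * u j)
          (fun j hj => by show M i j * u j = 0; rw [hlt i j hj, zero_mul])
      rw [h2] at h1
      have h3 : (∑ b : Fin (i : ℕ), M i (ι b) * u (ι b)) = -A := by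
        rw [hA, ← Finset.sum_neg_distrib]
        exact Finset.sum_congr rfl fun b _ => by ring
      rw [h3] at h1
      linarith
    have hrowv : M i i * v i = u i + B := by
      have h1 : (∑ j : Fin s, M i j * v j) = u i := by
        have := congrFun hMv i
        simpa [Matrix.mulVec, dotProduct] using this
      have h2 : (∑ j : Fin s, M i j * v j)
          = (∑ b : Fin (i : ℕ), M i (ι b) * v (ι b)) + M i i * v i :=
        hsplit' (fun j => M i j * v j)
          (fun j hj => by show M i j * v j = 0; rw [hlt i j hj, zero_mul])
      rw [h2] at h1
      have h3 : (∑ b : Fin (i : ℕ), M i (ι b) * v (ι b)) = -B := by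
        rw [hB, ← Finset.sum_neg_distrib]
        exact Finset.sum_congr rfl fun b _ => by ring
      rw [h3] at h1
      linarith
    have htm : t ≤ M i i := by
      have h1 : (0 : ℝ) ≤ ∑ j : Fin s, M i j := by
        have := hMe i
        simpa [Matrix.mulVec, dotProduct] using this
      have h2 : (∑ j : Fin s, M i j)
          = (∑ b : Fin (i : ℕ), M i (ι b)) + M i i :=
        hsplit' (fun j => M i j) (fun j hj => hlt i j hj)
      rw [h2] at h1
      have h3 : (∑ b : Fin (i : ℕ), M i (ι b)) = -t := by
        rw [ht, ← Finset.sum_neg_distrib]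
        exact Finset.sum_congr rfl fun b _ => (neg_neg _).symm
      rw [h3] at h1
      linarith
    -- if B = 0 then A = 0
    have hBA : B = 0 → A = 0 := by
      intro hBz
      rw [hA]
      apply Finset.sum_eq_zero
      intro b _
      have hterm : (-(M i (ι b))) * v (ι b) = 0 := by
        have := (Finset.sum_eq_zero_iff_of_nonneg
          (fun b _ => mul_nonneg (hcoef b) (hvn (ι b)).1)).mp (hB ▸ hBz) b (Finset.mem_univ b)
        exact this
      rcases mul_eq_zero.mp hterm with hc | hvz
      · rw [hc, zero_mul]
      · have huz : u (ι b) = 0 := by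
          have h1 := (hvn (ι b)).2
          rw [hvz, mul_zero] at h1
          exact le_antisymm h1 (hun (ι b)).1
        rw [huz, mul_zero]
    by_cases hBz : B = 0
    · -- easy case : A = 0
      have hAz : A = 0 := hBA hBz
      rw [hAz, add_zero] at hrowu
      have hm2 : (0 : ℝ) < M i i ^ 2 := by positivity
      have hfin : u i ^ 2 * M i i ^ 2 ≤ v i * M i i ^ 2 := by
        have h1 : M i i * (M i i * v i) = M i i * u i + M i i * B := by
          rw [hrowv]; ring
        nlinarith [mul_nonneg hm.le hB0, hrowu, h1]
      have huv : u i ^ 2 ≤ v i := le_of_mul_le_mul_right hfin hm2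
      have hc1 : (1 : ℝ) ≤ 2 * (s : ℝ) / ((s : ℝ) + 1) := by
        rw [le_div_iff₀ hσ0]
        linarith
      nlinarith [mul_le_mul_of_nonneg_right hc1 (hvn i).1, huv]
    · -- hard case : B > 0
      have hBpos : 0 < B := lt_of_le_of_ne hB0 (Ne.symm hBz)
      have htpos : 0 < t := by
        rcases lt_or_eq_of_le ht0 with h | h
        · exact h
        · exfalso
          apply hBz
          rw [hB]
          apply Finset.sum_eq_zero
          intro b _
          have hcz : -(M i (ι b)) = 0 := by
            have := (Finset.sum_eq_zero_iff_of_nonneg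
              (fun b _ => hcoef b)).mp (ht ▸ h.symm) b (Finset.mem_univ b)
            exact this
          rw [hcz, zero_mul]
      have hk1 : 1 ≤ (i : ℕ) := by
        by_contra hk
        have hk0 : (i : ℕ) = 0 := by omega
        have : t = 0 := by
          rw [ht]
          apply Finset.sum_eq_zero
          intro b _
          exact absurd b.2 (by omega)
        exact absurd this (ne_of_gt htpos)
      -- the submatrix
      set M' : Matrix (Fin (i : ℕ)) (Fin (i : ℕ)) ℝ := Matrix.of fun a b => M (ι a) (ι b)
        with hM'
      have hM'ab : ∀ a b, M' a b = M (ι a) (ι b) := fun a b => rfl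
      have h'lt : ∀ a b, a < b → M' a b = 0 := by
        intro a b hab
        exact hlt (ι a) (ι b) (by rw [Fin.lt_def]; exact Fin.lt_def.mp hab)
      have h'off : ∀ a b, a ≠ b → M' a b ≤ 0 := by
        intro a b hab
        refine hoff (ι a) (ι b) fun h => hab (Fin.ext ?_)
        have h2 := congrArg Fin.val h
        simpa using h2
      have h'diag : ∀ a, 0 < M' a a := fun a => hdiag (ι a)
      have h'det : IsUnit M'.det := by
        have hdet' : M'.det = ∏ a, M' a a := by
          apply Matrix.det_of_lowerTriangular
          intro a b hab
          exact h'lt a b (by simpa using hab)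
        rw [hdet']
        exact isUnit_iff_ne_zero.mpr (ne_of_gt (Finset.prod_pos fun a _ => h'diag a))
      -- extending sums over Fin i to sums over Fin s
      have hfull : ∀ f : Fin s → ℝ, (∀ j : Fin s, (i : ℕ) ≤ (j : ℕ) → f j = 0) →
          (∑ b : Fin (i : ℕ), f (ι b)) = ∑ j : Fin s, f j := by
        intro f hf
        exact (Finset.sum_congr rfl fun b _ => rfl).trans
          (sum_fin_extend (le_of_lt i.2) f hf)
      have hvanu : ∀ a : Fin (i : ℕ), ∀ j : Fin s, (i : ℕ) ≤ (j : ℕ) →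
          M (ι a) j * u j = 0 := by
        intro a j hj
        rw [hlt (ι a) j (by rw [Fin.lt_def]; exact lt_of_lt_of_le a.2 hj), zero_mul]
      have hvanv : ∀ a : Fin (i : ℕ), ∀ j : Fin s, (i : ℕ) ≤ (j : ℕ) →
          M (ι a) j * v j = 0 := by
        intro a j hj
        rw [hlt (ι a) j (by rw [Fin.lt_def]; exact lt_of_lt_of_le a.2 hj), zero_mul]
      have h'Me : ∀ a, 0 ≤ M'.mulVec (fun _ => (1 : ℝ)) a := by
        intro a
        have h1 : M'.mulVec (fun _ => (1 : ℝ)) a = ∑ b : Fin (i : ℕ), M (ι a) (ι b) := by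
          simp [Matrix.mulVec, dotProduct, hM'ab]
        have h2 : (∑ b : Fin (i : ℕ), M (ι a) (ι b)) = ∑ j : Fin s, M (ι a) j := by
          exact hfull (fun j => M (ι a) j)
            (fun j hj => hlt (ι a) j (by rw [Fin.lt_def]; exact lt_of_lt_of_le a.2 hj))
        have h3 := hMe (ι a)
        rw [h1, h2]
        simpa [Matrix.mulVec, dotProduct] using h3
      have h'invM : M'⁻¹ * M' = 1 := Matrix.nonsing_inv_mul M' h'det
      -- identify M'⁻¹ applied to ones
      have hMu' : M'.mulVec (fun b => u (ι b)) = fun _ => (1 : ℝ) := by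
        funext a
        have h1 : M'.mulVec (fun b => u (ι b)) a
            = ∑ b : Fin (i : ℕ), M (ι a) (ι b) * u (ι b) := by
          simp [Matrix.mulVec, dotProduct, hM'ab]
        rw [h1, hfull (fun j => M (ι a) j * u j) (hvanu a)]
        have := congrFun hMu (ι a)
        simpa [Matrix.mulVec, dotProduct] using this
      have hMv' : M'.mulVec (fun b => v (ι b)) = fun b => u (ι b) := by
        funext a
        have h1 : M'.mulVec (fun b => v (ι b)) a
            = ∑ b : Fin (i : ℕ), M (ι a) (ι b) * v (ι b) := by
          simp [Matrix.mulVec, dotProduct, hM'ab]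
        rw [h1, hfull (fun j => M (ι a) j * v j) (hvanv a)]
        have := congrFun hMv (ι a)
        simpa [Matrix.mulVec, dotProduct] using this
      have hinvu : M'⁻¹.mulVec (fun _ => (1 : ℝ)) = fun b => u (ι b) := by
        calc M'⁻¹.mulVec (fun _ => (1 : ℝ))
            = M'⁻¹.mulVec (M'.mulVec (fun b => u (ι b))) := by rw [hMu']
          _ = (M'⁻¹ * M').mulVec (fun b => u (ι b)) := by rw [Matrix.mulVec_mulVec]
          _ = fun b => u (ι b) := by rw [h'invM, Matrix.one_mulVec]
      have hinvv : (M'⁻¹ * M'⁻¹).mulVec (fun _ => (1 : ℝ)) = fun b => v (ι b) := by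
        calc (M'⁻¹ * M'⁻¹).mulVec (fun _ => (1 : ℝ))
            = M'⁻¹.mulVec (M'⁻¹.mulVec (fun _ => (1 : ℝ))) := by
              rw [Matrix.mulVec_mulVec]
          _ = M'⁻¹.mulVec (fun b => u (ι b)) := by rw [hinvu]
          _ = M'⁻¹.mulVec (M'.mulVec (fun b => v (ι b))) := by rw [hMv']
          _ = (M'⁻¹ * M').mulVec (fun b => v (ι b)) := by rw [Matrix.mulVec_mulVec]
          _ = fun b => v (ι b) := by rw [h'invM, Matrix.one_mulVec]
      -- the probability vector
      set w' : Fin (i : ℕ) → ℝ := fun b => (-(M i (ι b))) / t with hw'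
      have h'w : ∀ b, 0 ≤ w' b := fun b => div_nonneg (hcoef b) ht0
      have h'w1 : w' ⬝ᵥ (fun _ => (1 : ℝ)) = 1 := by
        simp only [hw', dotProduct, mul_one]
        rw [← Finset.sum_div, ← ht]
        exact div_self (ne_of_gt htpos)
      have hdotu : w' ⬝ᵥ (fun b => u (ι b)) = A / t := by
        simp only [hw', dotProduct]
        rw [hA, Finset.sum_div]
        exact Finset.sum_congr rfl fun b _ => by ring
      have hdotv : w' ⬝ᵥ (fun b => v (ι b)) = B / t := by
        simp only [hw', dotProduct]
        rw [hB, Finset.sum_div]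
        exact Finset.sum_congr rfl fun b _ => by ring
      have h'den : 0 < w' ⬝ᵥ (M'⁻¹ * M'⁻¹).mulVec (fun _ => (1 : ℝ)) := by
        rw [hinvv, hdotv]
        exact div_pos hBpos htpos
      have ihc := ih (i : ℕ) i.2 M' w' h'lt h'det h'Me h'off h'w h'w1 h'den
      rw [hinvu, hinvv, hdotu, hdotv] at ihc
      have hbt : (0 : ℝ) < B / t := div_pos hBpos htpos
      rw [div_le_iff₀ hbt] at ihc
      -- clear denominators: (k+1) A^2 ≤ 2 k (t B)
      have hκ1 : (1 : ℝ) ≤ ((i : ℕ) : ℝ) := by exact_mod_cast hk1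
      have hκ0 : (0 : ℝ) < ((i : ℕ) : ℝ) + 1 := by linarith
      have ht' : t ≠ 0 := ne_of_gt htpos
      have hA' : A = A / t * t := (div_mul_cancel₀ A ht').symm
      have hB' : B = B / t * t := (div_mul_cancel₀ B ht').symm
      have s1 : (((i : ℕ) : ℝ) + 1) * (A / t) ^ 2 ≤ 2 * ((i : ℕ) : ℝ) * (B / t) := by
        have h5 := mul_le_mul_of_nonneg_left ihc hκ0.le
        have h6 : (((i : ℕ) : ℝ) + 1) * (2 * ((i : ℕ) : ℝ) / (((i : ℕ) : ℝ) + 1) * (B / t))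
            = 2 * ((i : ℕ) : ℝ) * (B / t) := by
          field_simp
        linarith [h6 ▸ h5]
      have h3 : (((i : ℕ) : ℝ) + 1) * A ^ 2 ≤ 2 * ((i : ℕ) : ℝ) * (t * B) := by
        have h4 := mul_le_mul_of_nonneg_right s1 (sq_nonneg t)
        have e1 : (((i : ℕ) : ℝ) + 1) * (A / t) ^ 2 * t ^ 2
            = (((i : ℕ) : ℝ) + 1) * A ^ 2 := by
          field_simp
        have e2 : 2 * ((i : ℕ) : ℝ) * (B / t) * t ^ 2
            = 2 * ((i : ℕ) : ℝ) * (t * B) := by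
          field_simp
        linarith [e1 ▸ e2 ▸ h4]
      -- put everything together
      have hmB : t * B ≤ M i i * B := mul_le_mul_of_nonneg_right htm hB0
      have h6 : (((i : ℕ) : ℝ) + 1) * A ^ 2 ≤ 2 * ((i : ℕ) : ℝ) * (M i i * B) := by
        have : 2 * ((i : ℕ) : ℝ) * (t * B) ≤ 2 * ((i : ℕ) : ℝ) * (M i i * B) := by
          apply mul_le_mul_of_nonneg_left hmB
          positivity
        linarith
      have hκσ : ((i : ℕ) : ℝ) + 1 ≤ (s : ℝ) := by
        exact_mod_cast Nat.succ_le_of_lt i.2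
      have hquad := quad_step ((i : ℕ) : ℝ) (s : ℝ) A (M i i * B) hκ1 hκσ hA0 h6
      -- translate back to u i, v i
      have hfin : ((s : ℝ) + 1) * (M i i * u i) ^ 2
          ≤ 2 * (s : ℝ) * (M i i * (M i i * v i)) := by
        rw [hrowu, hrowv]
        have : M i i * (u i + B) = M i i * u i + M i i * B := by ring
        rw [this, hrowu]
        linarith [hquad]
      have hm2 : (0 : ℝ) < M i i ^ 2 := by positivity
      rw [div_mul_eq_mul_div, le_div_iff₀ hσ0]
      have hgoal : u i ^ 2 * ((s : ℝ) + 1) * M i i ^ 2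
          ≤ 2 * (s : ℝ) * v i * M i i ^ 2 := by
        linear_combination hfin
      exact le_of_mul_le_mul_right hgoal hm2
  -- assemble: Cauchy–Schwarz and the pointwise bound
  have hw1' : (∑ j, w j) = 1 := by
    have := hw1
    simpa [dotProduct] using this
  have hCS : (w ⬝ᵥ u) ^ 2 ≤ ∑ j, w j * u j ^ 2 := by
    have hcs := Finset.sum_mul_sq_le_sq_mul_sq Finset.univ
      (fun j => Real.sqrt (w j)) (fun j => Real.sqrt (w j) * u j)
    have h1 : (∑ j, Real.sqrt (w j) * (Real.sqrt (w j) * u j)) = ∑ j, w j * u j := by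
      refine Finset.sum_congr rfl fun j _ => ?_
      rw [← mul_assoc, Real.mul_self_sqrt (hw j)]
    have h2 : (∑ j, Real.sqrt (w j) ^ 2) = 1 := by
      rw [← hw1']
      exact Finset.sum_congr rfl fun j _ => Real.sq_sqrt (hw j)
    have h3 : (∑ j, (Real.sqrt (w j) * u j) ^ 2) = ∑ j, w j * u j ^ 2 := by
      refine Finset.sum_congr rfl fun j _ => ?_
      rw [mul_pow, Real.sq_sqrt (hw j)]
    rw [h1, h2, h3, one_mul] at hcs
    have h4 : w ⬝ᵥ u = ∑ j, w j * u j := rfl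
    rw [h4]
    exact hcs
  have hsum : (∑ j, w j * u j ^ 2) ≤ 2 * (s : ℝ) / ((s : ℝ) + 1) * (w ⬝ᵥ v) := by
    have h1 : (∑ j, w j * u j ^ 2)
        ≤ ∑ j, w j * (2 * (s : ℝ) / ((s : ℝ) + 1) * v j) :=
      Finset.sum_le_sum fun j _ => mul_le_mul_of_nonneg_left (key j) (hw j)
    have h2 : (∑ j, w j * (2 * (s : ℝ) / ((s : ℝ) + 1) * v j))
        = 2 * (s : ℝ) / ((s : ℝ) + 1) * (w ⬝ᵥ v) := by
      rw [dotProduct, Finset.mul_sum]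
      exact Finset.sum_congr rfl fun j _ => by ring
    linarith [h2 ▸ h1]
  rw [div_le_iff₀ hden]
  calc (w ⬝ᵥ u) ^ 2 ≤ ∑ j, w j * u j ^ 2 := hCS
    _ ≤ 2 * (s : ℝ) / ((s : ℝ) + 1) * (w ⬝ᵥ v) := hsum
    _ = 2 * (s : ℝ) / ((s : ℝ) + 1) * (w ⬝ᵥ v) := rfl
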